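/- For any twin-free graphs G and H, γ^{ID}(G □ H) ≥ max{γ^{ID}(G)·ρ₂(H), ρ₂(G)·γ^{ID}(H)}. -/

import Mathlib

open SimpleGraph

variable {V W : Type} 

/-- Closed neighborhood of a vertex. -/
def cN (G : SimpleGraph V) (v : V) : Set V := insert v (G.neighborSet v)

/-- `C` is a dominating set of `G`. -/
def IsDomSet (G : SimpleGraph V) (C : Set V) : Prop :=
  ∀ v : V, (cN G v ∩ C).Nonempty

/-- `C` is an identifying code of `G`. -/
def IsIDCode (G : SimpleGraph V) (C : Set V) : Prop :=
  IsDomSet G C ∧ ∀ u v : V, u ≠ v → cN G u ∩ C ≠ cN G v ∩ C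

/-- The identifying code number `γ^{ID}(G)`. -/
noncomputable def idNum (G : SimpleGraph V) : ℕ :=
  sInf {k | ∃ C : Set V, IsIDCode G C ∧ C.ncard = k}

/-- The domination number `γ(G)`. -/
noncomputable def domNum (G : SimpleGraph V) : ℕ :=
  sInf {k | ∃ C : Set V, IsDomSet G C ∧ C.ncard = k}

/-- A graph is twin-free if distinct vertices have distinct closed neighborhoods. -/
def TwinFree (G : SimpleGraph V) : Prop :=
  ∀ u v : V, cN G u = cN G v → u = v

/-- A 2-packing: vertices pairwise at distance at least 3. -/
def IsTwoPacking (G : SimpleGraph V) (S : Set V) : Prop :=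
  ∀ u ∈ S, ∀ v ∈ S, u ≠ v → 3 ≤ G.dist u v

/-- The 2-packing number `ρ₂(G)`. -/
noncomputable def pack2 (G : SimpleGraph V) : ℕ :=
  sSup {k | ∃ S : Set V, IsTwoPacking G S ∧ S.ncard = k}

/-- The prism of `G`: Cartesian product with `K₂`. -/
abbrev prism (G : SimpleGraph V) : SimpleGraph (V × Fin 2) :=
  G □ (⊤ : SimpleGraph (Fin 2))

/-- The graph `A_k` on `2k` vertices `x₁,…,x_{2k}`, with `xᵢ ~ xⱼ` iff `|i-j| ≤ k-1`. -/
def graphA (k : ℕ) : SimpleGraph (Fin (2 * k)) :=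
  SimpleGraph.fromRel (fun i j => |(i : ℤ) - (j : ℤ)| ≤ (k : ℤ) - 1)

/-- The join `G ⋈ H` of two graphs. -/
def joinG (G : SimpleGraph V) (H : SimpleGraph W) : SimpleGraph (V ⊕ W) :=
  SimpleGraph.fromRel (fun a b =>
    match a, b with
    | Sum.inl u, Sum.inl v => G.Adj u v
    | Sum.inr u, Sum.inr v => H.Adj u v
    | _, _ => True)

/-- The corona `H ∘ K₁`: add a pendant vertex to each vertex. -/
def corona (H : SimpleGraph V) : SimpleGraph (V ⊕ V) :=
  SimpleGraph.fromRel (fun a b =>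
    match a, b with
    | Sum.inl u, Sum.inl v => H.Adj u v
    | Sum.inl u, Sum.inr v => u = v
    | _, _ => False)

/-- The class `𝒜`: closure of `{A_k : k ≥ 1}` under join, up to isomorphism. -/
inductive ClassA : {V : Type} → SimpleGraph V → Prop
  | base (k : ℕ) (hk : 1 ≤ k) : ClassA (graphA k)
  | join {V W : Type} (G : SimpleGraph V) (H : SimpleGraph W) :
      ClassA G → ClassA H → ClassA (joinG G H)
  | iso {V W : Type} (G : SimpleGraph V) (H : SimpleGraph W) :
      ClassA G → (G ≃g H) → ClassA H

/-- Membership in `𝒜 ⋈ K₁`. -/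
def ClassAJoinK1 (G : SimpleGraph V) : Prop :=
  ∃ (W : Type) (H : SimpleGraph W), ClassA H ∧
    Nonempty (G ≃g joinG H (⊤ : SimpleGraph Unit))

section Aux

variable {α β : Type}

lemma mem_cN_self (G : SimpleGraph α) (v : α) : v ∈ cN G v := Set.mem_insert _ _

lemma mem_cN {G : SimpleGraph α} {u v : α} : u ∈ cN G v ↔ u = v ∨ G.Adj v u := by
  simp [cN]

lemma isIDCode_univ {G : SimpleGraph α} (hG : TwinFree G) : IsIDCode G Set.univ := by
  constructor
  · intro v; exact ⟨v, mem_cN_self G v, trivial⟩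
  · intro u v huv h
    apply huv
    apply hG
    simpa [Set.inter_univ] using h

lemma cN_boxProd {G : SimpleGraph α} {H : SimpleGraph β} {p q : α × β} :
    q ∈ cN (G □ H) p ↔ (q.2 = p.2 ∧ q.1 ∈ cN G p.1) ∨ (q.1 = p.1 ∧ q.2 ∈ cN H p.2) := by
  rcases p with ⟨a, b⟩
  rcases q with ⟨c, d⟩
  simp only [mem_cN, SimpleGraph.boxProd_adj, Prod.mk.injEq]
  constructor
  · rintro (⟨rfl, rfl⟩ | ⟨h, rfl⟩ | ⟨h, rfl⟩)
    · exact Or.inl ⟨rfl, Or.inl rfl⟩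
    · exact Or.inl ⟨rfl, Or.inr h⟩
    · exact Or.inr ⟨rfl, Or.inr h⟩
  · rintro (⟨rfl, rfl | h⟩ | ⟨rfl, rfl | h⟩)
    · exact Or.inl ⟨rfl, rfl⟩
    · exact Or.inr (Or.inl ⟨h, rfl⟩)
    · exact Or.inl ⟨rfl, rfl⟩
    · exact Or.inr (Or.inr ⟨h, rfl⟩)

lemma twinFree_box {G : SimpleGraph α} {H : SimpleGraph β} (hG : TwinFree G)
    (hH : TwinFree H) : TwinFree (G □ H) := by
  rintro ⟨a, b⟩ ⟨c, d⟩ h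
  have hmem : ((c, d) : α × β) ∈ cN (G □ H) (a, b) := by
    rw [h]; exact mem_cN_self _ _
  rcases cN_boxProd.1 hmem with ⟨hd, _⟩ | ⟨hc, _⟩
  · -- d = b : show a = c using hG
    simp only at hd
    rw [hd] at h ⊢
    have hac : a = c := by
      apply hG
      ext x
      constructor
      · intro hx
        have hxx : ((x, b) : α × β) ∈ cN (G □ H) (a, b) := cN_boxProd.2 (Or.inl ⟨rfl, hx⟩)
        rw [h] at hxx
        rcases cN_boxProd.1 hxx with ⟨_, hx'⟩ | ⟨hx', _⟩
        · exact hx'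
        · simp only at hx'; rw [hx']; exact mem_cN_self _ _
      · intro hx
        have hxx : ((x, b) : α × β) ∈ cN (G □ H) (c, b) := cN_boxProd.2 (Or.inl ⟨rfl, hx⟩)
        rw [← h] at hxx
        rcases cN_boxProd.1 hxx with ⟨_, hx'⟩ | ⟨hx', _⟩
        · exact hx'
        · simp only at hx'; rw [hx']; exact mem_cN_self _ _
    rw [hac]
  · -- c = a : show b = d using hH
    simp only at hc
    rw [hc] at h ⊢
    have hbd : b = d := by
      apply hH
      ext y
      constructor
      · intro hy
        have hyy : ((a, y) : α × β) ∈ cN (G □ H) (a, b) := cN_boxProd.2 (Or.inr ⟨rfl, hy⟩)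
        rw [h] at hyy
        rcases cN_boxProd.1 hyy with ⟨hy', _⟩ | ⟨_, hy'⟩
        · simp only at hy'; rw [hy']; exact mem_cN_self _ _
        · exact hy'
      · intro hy
        have hyy : ((a, y) : α × β) ∈ cN (G □ H) (a, d) := cN_boxProd.2 (Or.inr ⟨rfl, hy⟩)
        rw [← h] at hyy
        rcases cN_boxProd.1 hyy with ⟨hy', _⟩ | ⟨_, hy'⟩
        · simp only at hy'; rw [hy']; exact mem_cN_self _ _
        · exact hy'
    rw [hbd]

lemma idNum_le {G : SimpleGraph α} {C : Set α} (h : IsIDCode G C) : idNum G ≤ C.ncard :=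
  Nat.sInf_le ⟨C, h, rfl⟩

lemma idNum_spec {G : SimpleGraph α} (hG : TwinFree G) :
    ∃ C : Set α, IsIDCode G C ∧ C.ncard = idNum G := by
  have h : {k | ∃ C : Set α, IsIDCode G C ∧ C.ncard = k}.Nonempty :=
    ⟨(Set.univ : Set α).ncard, Set.univ, isIDCode_univ hG, rfl⟩
  exact Nat.sInf_mem h

end Aux
section Aux2

variable {α β : Type}

lemma cN_map {G : SimpleGraph α} {G' : SimpleGraph β} (e : G ≃g G') (v : α) :
    cN G' (e v) = (e : α → β) '' cN G v := by
  ext x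
  rw [mem_cN]
  constructor
  · rintro (rfl | h)
    · exact ⟨v, mem_cN_self _ _, rfl⟩
    · refine ⟨e.symm x, mem_cN.2 (Or.inr ?_), by simp⟩
      have : G'.Adj (e v) (e (e.symm x)) := by simpa using h
      exact e.map_adj_iff.1 this
  · rintro ⟨y, hy, rfl⟩
    rcases mem_cN.1 hy with rfl | h
    · exact Or.inl rfl
    · exact Or.inr (e.map_adj_iff.2 h)

lemma isIDCode_map {G : SimpleGraph α} {G' : SimpleGraph β} (e : G ≃g G') {C : Set α}
    (h : IsIDCode G C) : IsIDCode G' ((e : α → β) '' C) := by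
  have hinj : Function.Injective (e : α → β) := e.toEquiv.injective
  have key : ∀ v : β, cN G' v ∩ ((e : α → β) '' C) = (e : α → β) '' (cN G (e.symm v) ∩ C) := by
    intro v
    rw [Set.image_inter hinj, ← cN_map e (e.symm v)]
    congr 1
    simp
  constructor
  · intro v
    rw [key v]
    exact ((h.1 (e.symm v)).image _)
  · intro u v huv heq
    rw [key u, key v] at heq
    have := hinj.image_injective heq
    exact huv (by
      have h2 := h.2 (e.symm u) (e.symm v)
      by_contra _
      by_cases hs : e.symm u = e.symm v
      · exact huv (by simpa using congrArg (e : α → β) hs)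
      · exact h2 hs this)

lemma idNum_iso {G : SimpleGraph α} {G' : SimpleGraph β} (e : G ≃g G') :
    idNum G = idNum G' := by
  unfold idNum
  congr 1
  ext k
  constructor
  · rintro ⟨C, hC, rfl⟩
    exact ⟨(e : α → β) '' C, isIDCode_map e hC,
      Set.ncard_image_of_injective _ e.toEquiv.injective⟩
  · rintro ⟨C, hC, rfl⟩
    exact ⟨(e.symm : β → α) '' C, isIDCode_map e.symm hC,
      Set.ncard_image_of_injective _ e.symm.toEquiv.injective⟩

lemma ncard_succ_le {γ : Type} [Finite γ] {A B : Set (Set γ)} {x : γ} {v : Set γ}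
    (hv : v ∈ B) (h : ∀ t ∈ A, ∃ s ∈ B, s ≠ v ∧ s \ {x} = t) : A.ncard + 1 ≤ B.ncard := by
  have hsub : A ⊆ (fun s => s \ {x}) '' (B \ {v}) := by
    intro t ht
    obtain ⟨s, hs, hne, hst⟩ := h t ht
    exact ⟨s, ⟨hs, hne⟩, hst⟩
  have h1 : A.ncard ≤ (B \ {v}).ncard :=
    le_trans (Set.ncard_le_ncard hsub (Set.toFinite _)) (Set.ncard_image_le (Set.toFinite _))
  have h2 : (B \ {v}).ncard + 1 = B.ncard := Set.ncard_diff_singleton_add_one hv (Set.toFinite _)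
  omega

/-- The set of nonempty closed-neighborhood traces on `R`. -/
def vals (G : SimpleGraph α) (R : Set α) : Set (Set α) :=
  ((fun g => cN G g ∩ R) '' Set.univ) \ {(∅ : Set α)}

lemma inter_insert_diff {R : Set α} {x : α} (hx : x ∉ R) (N : Set α) :
    (N ∩ insert x R) \ {x} = N ∩ R := by
  ext y
  simp only [Set.mem_diff, Set.mem_inter_iff, Set.mem_insert_iff, Set.mem_singleton_iff]
  constructor
  · rintro ⟨⟨h1, rfl | h2⟩, h3⟩
    · exact absurd rfl h3
    · exact ⟨h1, h2⟩
  · rintro ⟨h1, h2⟩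
    exact ⟨⟨h1, Or.inr h2⟩, fun hyx => hx (hyx ▸ h2)⟩

lemma vals_le_card [Fintype α] (G : SimpleGraph α) (R : Set α) :
    (vals G R).ncard ≤ Fintype.card α := by
  have h1 : (vals G R).ncard ≤ (((fun g => cN G g ∩ R) '' Set.univ)).ncard :=
    Set.ncard_le_ncard Set.diff_subset (Set.toFinite _)
  have h2 : (((fun g => cN G g ∩ R) '' Set.univ)).ncard ≤ (Set.univ : Set α).ncard :=
    Set.ncard_image_le (Set.toFinite _)
  rw [Set.ncard_univ, Nat.card_eq_fintype_card] at h2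
  omega

end Aux2
section Aux3

variable {α : Type}

lemma mem_vals {G : SimpleGraph α} {R : Set α} {t : Set α} :
    t ∈ vals G R ↔ (∃ g, cN G g ∩ R = t) ∧ t ≠ ∅ := by
  simp [vals, Set.mem_diff]

lemma vals_step [Finite α] {G : SimpleGraph α} (hG : TwinFree G) {R : Set α}
    (hbad : ¬ ((∀ g, (cN G g ∩ R).Nonempty) ∧ ∀ u v : α, cN G u ∩ R = cN G v ∩ R → u = v)) :
    ∃ x, x ∉ R ∧ (vals G R).ncard + 1 ≤ (vals G (insert x R)).ncard := by
  by_cases hdom : ∀ g, (cN G g ∩ R).Nonempty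
  · -- domination holds, so injectivity fails
    have hinj : ¬ ∀ u v : α, cN G u ∩ R = cN G v ∩ R → u = v := fun h => hbad ⟨hdom, h⟩
    push_neg at hinj
    obtain ⟨u, v, huv, hne⟩ := hinj
    have hcn : cN G u ≠ cN G v := fun h => hne (hG u v h)
    have hx : ∃ x, (x ∈ cN G u ∧ x ∉ cN G v) ∨ (x ∈ cN G v ∧ x ∉ cN G u) := by
      by_contra hcon
      push_neg at hcon
      apply hcn
      ext z
      have := hcon z
      tauto
    -- a generic inner step, applied in both orders
    have key : ∀ u v : α, u ≠ v → cN G u ∩ R = cN G v ∩ R →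
        ∀ x, x ∈ cN G u → x ∉ cN G v →
        x ∉ R ∧ (vals G R).ncard + 1 ≤ (vals G (insert x R)).ncard := by
      intro u v hne huv x hxu hxv
      have hxR : x ∉ R := by
        intro hxR
        exact hxv ((huv ▸ (⟨hxu, hxR⟩ : x ∈ cN G u ∩ R)) : x ∈ cN G v ∩ R).1
      refine ⟨hxR, ?_⟩
      have hvstar : cN G u ∩ insert x R = insert x (cN G u ∩ R) := by
        ext y
        simp only [Set.mem_inter_iff, Set.mem_insert_iff]
        constructor
        · rintro ⟨h1, rfl | h2⟩
          · exact Or.inl rfl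
          · exact Or.inr ⟨h1, h2⟩
        · rintro (rfl | ⟨h1, h2⟩)
          · exact ⟨hxu, Or.inl rfl⟩
          · exact ⟨h1, Or.inr h2⟩
      apply ncard_succ_le (x := x) (v := insert x (cN G u ∩ R))
      · exact mem_vals.2 ⟨⟨u, hvstar⟩, (Set.insert_nonempty _ _).ne_empty⟩
      · intro t ht
        obtain ⟨⟨h, hht⟩, htne⟩ := mem_vals.1 ht
        by_cases hcase : t = cN G u ∩ R
        · -- use v as the witness
          refine ⟨cN G v ∩ insert x R, mem_vals.2 ⟨⟨v, rfl⟩, ?_⟩, ?_, ?_⟩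
          · intro hemp
            obtain ⟨z, hz⟩ := hdom v
            have hz2 : z ∈ cN G v ∩ insert x R := ⟨hz.1, Set.mem_insert_of_mem _ hz.2⟩
            rw [hemp] at hz2
            exact hz2
          · intro heq
            have : x ∈ cN G v ∩ insert x R := heq ▸ Set.mem_insert _ _
            exact hxv this.1
          · rw [inter_insert_diff hxR, hcase, huv]
        · refine ⟨cN G h ∩ insert x R, mem_vals.2 ⟨⟨h, rfl⟩, ?_⟩, ?_, ?_⟩
          · intro hemp
            have h9 : cN G h ∩ R ⊆ cN G h ∩ insert x R :=
              Set.inter_subset_inter_right _ (Set.subset_insert _ _)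
            rw [hemp, Set.subset_empty_iff, hht] at h9
            exact htne h9
          · intro heq
            have h10 := congrArg (fun s => s \ {x}) heq
            rw [inter_insert_diff hxR] at h10
            have h11 : insert x (cN G u ∩ R) \ {x} = cN G u ∩ R :=
              Set.insert_diff_self_of_notMem (fun hc => hxR hc.2)
            rw [h11, hht] at h10
            exact hcase h10
          · rw [inter_insert_diff hxR, hht]
    rcases hx with ⟨x, ⟨hxu, hxv⟩ | ⟨hxv, hxu⟩⟩
    · exact ⟨x, key u v hne huv x hxu hxv⟩
    · exact ⟨x, key v u (Ne.symm hne) huv.symm x hxv hxu⟩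
  · -- domination fails at some g
    push_neg at hdom
    obtain ⟨g, hg⟩ := hdom
    have hgR : g ∉ R := by
      intro hgR
      have : g ∈ cN G g ∩ R := ⟨mem_cN_self _ _, hgR⟩
      rw [hg] at this
      exact this
    refine ⟨g, hgR, ?_⟩
    have hvstar : cN G g ∩ insert g R = {g} := by
      ext y
      simp only [Set.mem_inter_iff, Set.mem_insert_iff, Set.mem_singleton_iff]
      constructor
      · rintro ⟨h1, rfl | h2⟩
        · rfl
        · exact absurd (show y ∈ cN G g ∩ R from ⟨h1, h2⟩) (by rw [hg]; exact Set.notMem_empty y)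
      · rintro rfl
        exact ⟨mem_cN_self _ _, Or.inl rfl⟩
    apply ncard_succ_le (x := g) (v := ({g} : Set α))
    · exact mem_vals.2 ⟨⟨g, hvstar⟩, by simp⟩
    · intro t ht
      obtain ⟨⟨h, hht⟩, htne⟩ := mem_vals.1 ht
      refine ⟨cN G h ∩ insert g R, mem_vals.2 ⟨⟨h, rfl⟩, ?_⟩, ?_, ?_⟩
      · intro hemp
        have h9 : cN G h ∩ R ⊆ cN G h ∩ insert g R :=
          Set.inter_subset_inter_right _ (Set.subset_insert _ _)
        rw [hemp, Set.subset_empty_iff, hht] at h9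
        exact htne h9
      · intro heq
        have h10 := congrArg (fun s => s \ {g}) heq
        rw [inter_insert_diff hgR, hht] at h10
        rw [Set.diff_self] at h10
        exact htne h10
      · rw [inter_insert_diff hgR, hht]

lemma lemB [Fintype α] {G : SimpleGraph α} (hG : TwinFree G) :
    ∀ (m : ℕ) (R : Set α), Fintype.card α - (vals G R).ncard ≤ m →
      idNum G + (vals G R).ncard ≤ R.ncard + Fintype.card α := by
  intro m
  induction m with
  | zero =>
    intro R hR
    by_cases hgood : (∀ g, (cN G g ∩ R).Nonempty) ∧ ∀ u v : α, cN G u ∩ R = cN G v ∩ R → u = v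
    · have hcode : IsIDCode G R :=
        ⟨fun v => hgood.1 v, fun u v hne heq => hne (hgood.2 u v heq)⟩
      have := idNum_le hcode
      have := vals_le_card G R
      omega
    · obtain ⟨x, _, hstep⟩ := vals_step hG hgood
      have h1 := vals_le_card G (insert x R)
      omega
  | succ m ih =>
    intro R hR
    by_cases hgood : (∀ g, (cN G g ∩ R).Nonempty) ∧ ∀ u v : α, cN G u ∩ R = cN G v ∩ R → u = v
    · have hcode : IsIDCode G R :=
        ⟨fun v => hgood.1 v, fun u v hne heq => hne (hgood.2 u v heq)⟩
      have := idNum_le hcode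
      have := vals_le_card G R
      omega
    · obtain ⟨x, _, hstep⟩ := vals_step hG hgood
      have hih := ih (insert x R) (by omega)
      have hcard : (insert x R).ncard ≤ R.ncard + 1 := Set.ncard_insert_le _ _
      omega

end Aux3
section Aux4

variable {α β : Type}

open Classical in
lemma slab_bound [Fintype α] [Fintype β] {G : SimpleGraph α} {H : SimpleGraph β}
    (hG : TwinFree G) {C : Set (α × β)} (hC : IsIDCode (G □ H) C) (w : β) :
    idNum G ≤ {p : α × β | p ∈ C ∧ p.2 ∈ cN H w}.ncard := by
  set slab : Set (α × β) := {p : α × β | p ∈ C ∧ p.2 ∈ cN H w} with hslab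
  set row : Set (α × β) := {p : α × β | p ∈ C ∧ p.2 = w} with hrow
  set R : Set α := {g : α | (g, w) ∈ C} with hR
  set Q : α → Set β := fun g => {y : β | y ∈ cN H w ∧ y ≠ w ∧ (g, y) ∈ C} with hQ
  -- F1 : domination fact
  have F1 : ∀ g : α, (cN G g ∩ R).Nonempty ∨ (Q g).Nonempty := by
    intro g
    obtain ⟨⟨a, b⟩, hmem, hbC⟩ := hC.1 (g, w)
    rcases cN_boxProd.1 hmem with ⟨hb, ha⟩ | ⟨ha, hb⟩
    · simp only at hb ha
      subst hb
      exact Or.inl ⟨a, ha, hbC⟩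
    · simp only at ha hb
      subst ha
      by_cases hbw : b = w
      · subst hbw
        exact Or.inl ⟨a, mem_cN_self _ _, hbC⟩
      · exact Or.inr ⟨b, hb, hbw, hbC⟩
  -- the view of a row vertex
  have hview : ∀ g : α, Q g = ∅ →
      cN (G □ H) (g, w) ∩ C = {p : α × β | p.2 = w ∧ p.1 ∈ cN G g ∩ R} := by
    intro g hQg
    ext ⟨a, b⟩
    simp only [Set.mem_inter_iff, Set.mem_setOf_eq]
    constructor
    · rintro ⟨hmem, hbC⟩
      rcases cN_boxProd.1 hmem with ⟨hb, ha⟩ | ⟨ha, hb⟩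
      · simp only at hb ha
        subst hb
        exact ⟨rfl, ha, hbC⟩
      · simp only at ha hb
        subst ha
        by_cases hbw : b = w
        · subst hbw
          exact ⟨rfl, mem_cN_self _ _, hbC⟩
        · exact absurd (show b ∈ Q a from ⟨hb, hbw, hbC⟩) (by rw [hQg]; exact Set.notMem_empty b)
    · rintro ⟨hb, ha, haR⟩
      have hb' : b = w := hb
      subst hb'
      exact ⟨cN_boxProd.2 (Or.inl ⟨rfl, ha⟩), haR⟩
  -- F2 : separation fact
  have F2 : ∀ g g' : α, cN G g ∩ R = cN G g' ∩ R → Q g = ∅ → Q g' = ∅ → g = g' := by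
    intro g g' hnu hq hq'
    by_contra hne
    apply hC.2 (g, w) (g', w) (by simp [hne])
    rw [hview g hq, hview g' hq', hnu]
  -- counting
  have hB := lemB hG (Fintype.card α) R (Nat.sub_le _ _)
  set V1 : Set α := {g : α | Q g = ∅} with hV1
  have hcompl : V1.ncard + V1ᶜ.ncard = Fintype.card α := by
    rw [Set.ncard_add_ncard_compl, Nat.card_eq_fintype_card]
  have hV1c : V1.ncard ≤ (vals G R).ncard := by
    have hinj : Set.InjOn (fun g => cN G g ∩ R) V1 := by
      intro g hg g' hg' heq
      exact F2 g g' heq hg hg'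
    have hsub : (fun g => cN G g ∩ R) '' V1 ⊆ vals G R := by
      rintro t ⟨g, hg, rfl⟩
      refine mem_vals.2 ⟨⟨g, rfl⟩, ?_⟩
      rcases F1 g with h | h
      · exact h.ne_empty
      · exact absurd hg (by simpa [hV1] using h.ne_empty)
    calc V1.ncard = ((fun g => cN G g ∩ R) '' V1).ncard :=
          (Set.ncard_image_of_injOn hinj).symm
      _ ≤ (vals G R).ncard := Set.ncard_le_ncard hsub (Set.toFinite _)
  have hV2c : V1ᶜ.ncard ≤ (slab \ row).ncard := by
    set f : α → α × β := fun g => (g, if h : (Q g).Nonempty then h.some else w) with hf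
    have hinj : Set.InjOn f V1ᶜ := by
      intro g _ g' _ heq
      exact congrArg Prod.fst heq
    have hsub : f '' V1ᶜ ⊆ slab \ row := by
      rintro p ⟨g, hg, rfl⟩
      have hne : (Q g).Nonempty := by
        rw [Set.nonempty_iff_ne_empty]
        simpa [hV1] using hg
      have hy := hne.some_mem
      obtain ⟨hy1, hy2, hy3⟩ := hy
      simp only [hf, dif_pos hne]
      exact ⟨⟨hy3, hy1⟩, by simp [hrow, hy2]⟩
    calc V1ᶜ.ncard = (f '' V1ᶜ).ncard := (Set.ncard_image_of_injOn hinj).symm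
      _ ≤ (slab \ row).ncard := Set.ncard_le_ncard hsub (Set.toFinite _)
  have hrowR : row.ncard = R.ncard := by
    have : row = (fun g => (g, w)) '' R := by
      ext ⟨a, b⟩
      constructor
      · rintro ⟨h1, h2⟩
        simp only at h2
        subst h2
        exact ⟨a, h1, rfl⟩
      · rintro ⟨g, hg, heq⟩
        rw [← heq]
        exact ⟨hg, rfl⟩
    rw [this]
    exact Set.ncard_image_of_injective _ (fun a b h => congrArg Prod.fst h)
  have hrowsub : row ⊆ slab := by
    rintro p ⟨h1, h2⟩
    exact ⟨h1, h2 ▸ mem_cN_self _ _⟩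
  have hsplit : (slab \ row).ncard + row.ncard = slab.ncard :=
    Set.ncard_diff_add_ncard_of_subset hrowsub (Set.toFinite _)
  omega

end Aux4
section Aux5

variable {α β : Type}

lemma cN_disjoint_of_dist {H : SimpleGraph β} {w w' : β} (h3 : 3 ≤ H.dist w w') :
    cN H w ∩ cN H w' = ∅ := by
  rw [Set.eq_empty_iff_forall_notMem]
  rintro y ⟨hy, hy'⟩
  have p1 : ∃ p : H.Walk w y, p.length ≤ 1 := by
    rcases mem_cN.1 hy with rfl | hadj
    · exact ⟨SimpleGraph.Walk.nil, by simp⟩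
    · exact ⟨SimpleGraph.Walk.cons hadj SimpleGraph.Walk.nil, by simp⟩
  have p2 : ∃ p : H.Walk y w', p.length ≤ 1 := by
    rcases mem_cN.1 hy' with rfl | hadj
    · exact ⟨SimpleGraph.Walk.nil, by simp⟩
    · exact ⟨SimpleGraph.Walk.cons hadj.symm SimpleGraph.Walk.nil, by simp⟩
  obtain ⟨p, hp⟩ := p1
  obtain ⟨q, hq⟩ := p2
  have hd : H.dist w w' ≤ (p.append q).length := SimpleGraph.dist_le _
  rw [SimpleGraph.Walk.length_append] at hd
  omega

lemma pack2_spec [Fintype β] (H : SimpleGraph β) :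
    ∃ S : Set β, IsTwoPacking H S ∧ S.ncard = pack2 H := by
  have hne : {k | ∃ S : Set β, IsTwoPacking H S ∧ S.ncard = k}.Nonempty :=
    ⟨0, ∅, fun u hu => absurd hu (Set.notMem_empty u), Set.ncard_empty _⟩
  have hbdd : BddAbove {k | ∃ S : Set β, IsTwoPacking H S ∧ S.ncard = k} := by
    refine ⟨Fintype.card β, ?_⟩
    rintro k ⟨S, _, rfl⟩
    have := Set.ncard_le_ncard (Set.subset_univ S) (Set.toFinite _)
    rwa [Set.ncard_univ, Nat.card_eq_fintype_card] at this
  exact Nat.sSup_mem hne hbdd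

open Classical in
lemma key_bound [Fintype α] [Fintype β] (G : SimpleGraph α) (H : SimpleGraph β)
    (hG : TwinFree G) (hH : TwinFree H) : idNum G * pack2 H ≤ idNum (G □ H) := by
  obtain ⟨S, hS, hScard⟩ := pack2_spec H
  obtain ⟨C, hC, hCcard⟩ := idNum_spec (twinFree_box hG hH)
  set slab : β → Set (α × β) := fun w => {p : α × β | p ∈ C ∧ p.2 ∈ cN H w} with hslab
  have hb : ∀ w, idNum G ≤ (slab w).ncard := fun w => slab_bound hG hC w
  set F : Finset β := S.toFinite.toFinset with hF
  have hFcard : F.card = pack2 H := by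
    rw [← hScard, Set.ncard_eq_toFinset_card S S.toFinite]
  set t : β → Finset (α × β) := fun w => (slab w).toFinite.toFinset with ht
  have htcard : ∀ w, (t w).card = (slab w).ncard :=
    fun w => (Set.ncard_eq_toFinset_card (slab w) (slab w).toFinite).symm
  have hdisj : ∀ w ∈ F, ∀ w' ∈ F, w ≠ w' → Disjoint (t w) (t w') := by
    intro w hw w' hw' hne
    rw [Finset.disjoint_left]
    intro p hp hp'
    rw [ht, Set.Finite.mem_toFinset] at hp hp'
    have h3 := hS w (by rwa [hF, Set.Finite.mem_toFinset] at hw)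
      w' (by rwa [hF, Set.Finite.mem_toFinset] at hw') hne
    have hdis := cN_disjoint_of_dist h3
    have : p.2 ∈ cN H w ∩ cN H w' := ⟨hp.2, hp'.2⟩
    rw [hdis] at this
    exact this
  have hsum : ∑ w ∈ F, (t w).card = (F.biUnion t).card := (Finset.card_biUnion hdisj).symm
  have hsub : F.biUnion t ⊆ C.toFinite.toFinset := by
    intro p hp
    rw [Finset.mem_biUnion] at hp
    obtain ⟨w, _, hp⟩ := hp
    rw [ht, Set.Finite.mem_toFinset] at hp
    rw [Set.Finite.mem_toFinset]
    exact hp.1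
  have hle : (F.biUnion t).card ≤ C.ncard := by
    rw [Set.ncard_eq_toFinset_card C C.toFinite]
    exact Finset.card_le_card hsub
  have hlow : F.card * idNum G ≤ ∑ w ∈ F, (t w).card := by
    refine Finset.card_nsmul_le_sum F _ _ ?_
    intro w _
    rw [htcard w]
    exact hb w
  calc idNum G * pack2 H = F.card * idNum G := by rw [hFcard, mul_comm]
    _ ≤ ∑ w ∈ F, (t w).card := hlow
    _ = (F.biUnion t).card := hsum
    _ ≤ C.ncard := hle
    _ = idNum (G □ H) := hCcard

end Aux5

/-- for twin-free G, H:
γ^ID(G □ H) ≥ max(γ^ID(G)·ρ₂(H), ρ₂(G)·γ^ID(H)). -/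
theorem stmt11 {V W : Type} [Fintype V] [Fintype W] (G : SimpleGraph V)
    (H : SimpleGraph W) (hG : TwinFree G) (hH : TwinFree H) :
    max (idNum G * pack2 H) (pack2 G * idNum H) ≤ idNum (G □ H) := by
  apply max_le
  · exact key_bound G H hG hH
  · have hiso : idNum (H □ G) = idNum (G □ H) :=
      idNum_iso (SimpleGraph.boxProdComm H G)
    rw [mul_comm, ← hiso]
    exact key_bound H G hH hG
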